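/- Let d ≥ 3, λ > 0, η ≥ 0, and L = 2^N. There is a constant c₁ = c₁(d) > 0 such that for every integer R with 1 ≤ 2R + 1 ≤ L/2, μ^{+,per}_{L;λ,η}( φ_j > 0 for all j ∈ B_R ) ≤ exp( − c₁ R^d f^{per}_L(λ,η) ), where B_R = {j ∈ T_L^d : ‖j‖_∞ ≤ R}. -/

import Mathlib

open MeasureTheory Filter
open scoped Classical



/-- Nearest-neighbour adjacency on the torus `T_L^d = (ℤ/Lℤ)^d`. -/
def torusAdj (d L : ℕ) (i j : Fin d → ZMod L) : Prop :=
  ∃ k : Fin d, j = Function.update i k (i k + 1) ∨ j = Function.update i k (i k - 1)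

/-- The periodic Hamiltonian `H^{per}_{L;λ}(φ)`. -/
noncomputable def HamPer (d L : ℕ) [NeZero L] (lam : ℝ) (V : ℝ → ℝ)
    (ψ : (Fin d → ZMod L) → ℝ) : ℝ :=
  (1 / (8 * d)) * ∑ i, ∑ j, (if torusAdj d L i j then (ψ i - ψ j) ^ 2 else 0)
    + lam * ∑ i, V (ψ i)

/-- The a priori measure `∏_{i ∈ T_L^d} (dφ_i + η δ₀(dφ_i))` on the torus. -/
noncomputable def priorPer (d L : ℕ) [NeZero L] (η : ℝ) : Measure ((Fin d → ZMod L) → ℝ) :=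
  Measure.pi fun _ => (volume + ENNReal.ofReal η • Measure.dirac (0 : ℝ))

/-- Density `e^{-H^{per}_{L;λ}(φ)} 𝟙_{Ω₊}(φ)`. -/
noncomputable def densPer (d L : ℕ) [NeZero L] (lam : ℝ) (V : ℝ → ℝ)
    (φ : (Fin d → ZMod L) → ℝ) : ℝ :=
  if ∀ i, 0 ≤ φ i then Real.exp (-(HamPer d L lam V φ)) else 0

/-- The unnormalized Gibbs measure with hard wall, periodic boundary condition. -/
noncomputable def gibbsPer (d L : ℕ) [NeZero L] (lam η : ℝ) (V : ℝ → ℝ) :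
    Measure ((Fin d → ZMod L) → ℝ) :=
  (priorPer d L η).withDensity fun φ => ENNReal.ofReal (densPer d L lam V φ)

/-- The partition function `Z^{+,per}_{L;λ,η}`. -/
noncomputable def ZplusPer (d L : ℕ) [NeZero L] (lam η : ℝ) (V : ℝ → ℝ) : ℝ :=
  (gibbsPer d L lam η V Set.univ).toReal

/-- The restricted partition function `Z^{+,per}_{L;λ,η}[A]`. -/
noncomputable def ZplusPerIn (d L : ℕ) [NeZero L] (lam η : ℝ) (V : ℝ → ℝ)
    (A : Set ((Fin d → ZMod L) → ℝ)) : ℝ :=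
  (gibbsPer d L lam η V A).toReal

/-- The normalized Gibbs measure `μ^{+,per}_{L;λ,η}`. -/
noncomputable def muPer (d L : ℕ) [NeZero L] (lam η : ℝ) (V : ℝ → ℝ) :
    Measure ((Fin d → ZMod L) → ℝ) :=
  (gibbsPer d L lam η V Set.univ)⁻¹ • gibbsPer d L lam η V

/-- The periodic finite-volume free energy `f^{per}_L(λ,η)`. -/
noncomputable def freeEnergyPer (d L : ℕ) [NeZero L] (lam η : ℝ) (V : ℝ → ℝ) : ℝ :=
  ((L : ℝ) ^ d)⁻¹ * Real.log (ZplusPer d L lam η V / ZplusPer d L lam 0 V)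

/-- The generalized inverse `V⁻¹(y) = inf {x ≥ 0 : V(x) ≥ y}`. -/
noncomputable def Vinv (V : ℝ → ℝ) (y : ℝ) : ℝ :=
  sInf {x : ℝ | 0 ≤ x ∧ y ≤ V x}


/-- The ball `B_R = {j ∈ T_L^d : ‖j‖_∞ ≤ R}` on the torus: the set of sites all of whose
coordinates are represented by an integer of absolute value at most `R`. -/
def torusBall (d L R : ℕ) : Set (Fin d → ZMod L) :=
  {j | ∀ m, ∃ z : ℤ, z.natAbs ≤ R ∧ (z : ZMod L) = j m}

/-! #### Auxiliary material: the Ahlswede–Daykin inequality in `ℝ≥0∞` -/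

open scoped ENNReal

section AD

/-- Pointwise two-point Ahlswede–Daykin lemma in `ℝ≥0∞`. -/
lemma ad_pointwise {p q X Y : ℝ≥0∞} (hp : p ≤ Y) (hq : q ≤ Y) (hpq : p * q ≤ X * Y) :
    p + q ≤ X + Y := by
  by_cases hYt : Y = ⊤
  · simp [hYt]
  by_cases hY0 : Y = 0
  · subst hY0
    simp only [le_zero_iff] at hp hq
    simp [hp, hq]
  by_cases hXt : X = ⊤
  · simp [hXt]
  have hpt : p ≠ ⊤ := fun h => hYt (top_le_iff.mp (h ▸ hp))
  have hqt : q ≠ ⊤ := fun h => hYt (top_le_iff.mp (h ▸ hq))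
  rw [← ENNReal.toReal_le_toReal (by simp [hpt, hqt]) (by simp [hXt, hYt]),
    ENNReal.toReal_add hpt hqt, ENNReal.toReal_add hXt hYt]
  have hpr : p.toReal ≤ Y.toReal := ENNReal.toReal_mono hYt hp
  have hqr : q.toReal ≤ Y.toReal := ENNReal.toReal_mono hYt hq
  have hpqr : p.toReal * q.toReal ≤ X.toReal * Y.toReal := by
    rw [← ENNReal.toReal_mul, ← ENNReal.toReal_mul]
    exact ENNReal.toReal_mono (by simp [ENNReal.mul_eq_top, hXt, hYt]) hpq
  have hYr : 0 < Y.toReal := ENNReal.toReal_pos hY0 hYt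
  have hp0 : 0 ≤ p.toReal := ENNReal.toReal_nonneg
  have hq0 : 0 ≤ q.toReal := ENNReal.toReal_nonneg
  nlinarith [mul_nonneg (sub_nonneg.mpr hpr) (sub_nonneg.mpr hqr)]

/-- One-dimensional Ahlswede–Daykin (four functions) inequality over `ℝ`. -/
lemma ad_one (ν : Measure ℝ) [SigmaFinite ν] {a b c d : ℝ → ℝ≥0∞}
    (ma : Measurable a) (mb : Measurable b) (mc : Measurable c) (md : Measurable d)
    (h : ∀ s t : ℝ, a s * b t ≤ c (s ⊔ t) * d (s ⊓ t)) :
    (∫⁻ x, a x ∂ν) * (∫⁻ x, b x ∂ν) ≤ (∫⁻ x, c x ∂ν) * (∫⁻ x, d x ∂ν) := by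
  set μ2 : Measure (ℝ × ℝ) := ν.prod ν with hμ2
  have hlt : MeasurableSet {p : ℝ × ℝ | p.1 < p.2} :=
    measurableSet_lt measurable_fst measurable_snd
  have hgt : MeasurableSet {p : ℝ × ℝ | p.2 < p.1} :=
    measurableSet_lt measurable_snd measurable_fst
  have hdiag : MeasurableSet {p : ℝ × ℝ | p.1 = p.2} :=
    measurableSet_eq_fun measurable_fst measurable_snd
  have key : ∀ f g : ℝ → ℝ≥0∞, Measurable f → Measurable g →
      ∫⁻ p : ℝ × ℝ, f p.1 * g p.2 ∂μ2
        = (∫⁻ p : ℝ × ℝ in {p | p.1 < p.2}, (f p.1 * g p.2 + g p.1 * f p.2) ∂μ2)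
          + ∫⁻ p : ℝ × ℝ in {p | p.1 = p.2}, f p.1 * g p.2 ∂μ2 := by
    intro f g mf mg
    have hmfg : Measurable fun p : ℝ × ℝ => f p.1 * g p.2 :=
      (mf.comp measurable_fst).mul (mg.comp measurable_snd)
    have hsplit : ({p : ℝ × ℝ | p.1 < p.2})ᶜ
        = {p : ℝ × ℝ | p.2 < p.1} ∪ {p : ℝ × ℝ | p.1 = p.2} := by
      ext p
      simp only [Set.mem_compl_iff, Set.mem_setOf_eq, Set.mem_union, not_lt]
      constructor
      · intro hle
        rcases lt_or_eq_of_le hle with h' | h'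
        · exact Or.inl h'
        · exact Or.inr h'.symm
      · rintro (h' | h')
        · exact le_of_lt h'
        · exact h'.ge
    have hswap : ∫⁻ p : ℝ × ℝ in {p | p.2 < p.1}, f p.1 * g p.2 ∂μ2
        = ∫⁻ p : ℝ × ℝ in {p | p.1 < p.2}, g p.1 * f p.2 ∂μ2 := by
      have hmp : MeasurePreserving Prod.swap μ2 μ2 := Measure.measurePreserving_swap
      have hF : Measurable (({p : ℝ × ℝ | p.2 < p.1}).indicator
          (fun p : ℝ × ℝ => f p.1 * g p.2)) := hmfg.indicator hgt
      have := hmp.lintegral_comp hF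
      rw [← lintegral_indicator hgt, ← lintegral_indicator hlt]
      calc ∫⁻ p : ℝ × ℝ, ({p : ℝ × ℝ | p.2 < p.1}).indicator
            (fun p : ℝ × ℝ => f p.1 * g p.2) p ∂μ2
          = ∫⁻ p : ℝ × ℝ, ({p : ℝ × ℝ | p.2 < p.1}).indicator
            (fun p : ℝ × ℝ => f p.1 * g p.2) (Prod.swap p) ∂μ2 := this.symm
        _ = ∫⁻ p : ℝ × ℝ, ({p : ℝ × ℝ | p.1 < p.2}).indicator
            (fun p : ℝ × ℝ => g p.1 * f p.2) p ∂μ2 := by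
            congr 1
            funext p
            by_cases hp : p.1 < p.2
            · rw [Set.indicator_of_mem (by simpa using hp), Set.indicator_of_mem (by exact hp)]
              exact mul_comm _ _
            · rw [Set.indicator_of_notMem (by simpa using hp),
                Set.indicator_of_notMem (by exact hp)]
    have hdisj : Disjoint {p : ℝ × ℝ | p.2 < p.1} {p : ℝ × ℝ | p.1 = p.2} :=
      Set.disjoint_left.mpr fun q hq1 hq2 => absurd hq2 (ne_of_gt hq1)
    calc ∫⁻ p : ℝ × ℝ, f p.1 * g p.2 ∂μ2
        = (∫⁻ p : ℝ × ℝ in {p | p.1 < p.2}, f p.1 * g p.2 ∂μ2)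
          + ∫⁻ p : ℝ × ℝ in ({p : ℝ × ℝ | p.1 < p.2})ᶜ, f p.1 * g p.2 ∂μ2 :=
          (lintegral_add_compl _ hlt).symm
      _ = (∫⁻ p : ℝ × ℝ in {p | p.1 < p.2}, f p.1 * g p.2 ∂μ2)
          + ((∫⁻ p : ℝ × ℝ in {p | p.2 < p.1}, f p.1 * g p.2 ∂μ2)
            + ∫⁻ p : ℝ × ℝ in {p | p.1 = p.2}, f p.1 * g p.2 ∂μ2) := by
          rw [hsplit, lintegral_union hdiag hdisj]
      _ = (∫⁻ p : ℝ × ℝ in {p | p.1 < p.2}, (f p.1 * g p.2 + g p.1 * f p.2) ∂μ2)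
          + ∫⁻ p : ℝ × ℝ in {p | p.1 = p.2}, f p.1 * g p.2 ∂μ2 := by
          rw [hswap, lintegral_add_left hmfg]
          exact (add_assoc _ _ _).symm
  have hab : (∫⁻ x, a x ∂ν) * (∫⁻ x, b x ∂ν) = ∫⁻ p : ℝ × ℝ, a p.1 * b p.2 ∂μ2 :=
    (lintegral_prod_mul ma.aemeasurable mb.aemeasurable).symm
  have hcd : (∫⁻ x, c x ∂ν) * (∫⁻ x, d x ∂ν) = ∫⁻ p : ℝ × ℝ, c p.1 * d p.2 ∂μ2 :=
    (lintegral_prod_mul mc.aemeasurable md.aemeasurable).symm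
  rw [hab, hcd, key a b ma mb, key c d mc md]
  have hmono1 : ∫⁻ p : ℝ × ℝ in {p | p.1 < p.2}, (a p.1 * b p.2 + b p.1 * a p.2) ∂μ2
      ≤ ∫⁻ p : ℝ × ℝ in {p | p.1 < p.2}, (c p.1 * d p.2 + d p.1 * c p.2) ∂μ2 := by
    refine setLIntegral_mono (((mc.comp measurable_fst).mul (md.comp measurable_snd)).add
      ((md.comp measurable_fst).mul (mc.comp measurable_snd))) ?_
    intro p hp
    have hst : p.1 ≤ p.2 := le_of_lt hp
    have h1 : a p.1 * b p.2 ≤ c p.2 * d p.1 := by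
      have := h p.1 p.2
      rwa [sup_eq_right.mpr hst, inf_eq_left.mpr hst] at this
    have h2 : b p.1 * a p.2 ≤ c p.2 * d p.1 := by
      have h2' := h p.2 p.1
      rw [sup_eq_left.mpr hst, inf_eq_right.mpr hst] at h2'
      calc b p.1 * a p.2 = a p.2 * b p.1 := mul_comm _ _
        _ ≤ c p.2 * d p.1 := h2'
    have h3 : (a p.1 * b p.2) * (b p.1 * a p.2) ≤ (c p.1 * d p.2) * (c p.2 * d p.1) := by
      have ha1 : a p.1 * b p.1 ≤ c p.1 * d p.1 := by
        have := h p.1 p.1; rwa [sup_idem, inf_idem] at this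
      have ha2 : a p.2 * b p.2 ≤ c p.2 * d p.2 := by
        have := h p.2 p.2; rwa [sup_idem, inf_idem] at this
      calc (a p.1 * b p.2) * (b p.1 * a p.2) = (a p.1 * b p.1) * (a p.2 * b p.2) := by ring
        _ ≤ (c p.1 * d p.1) * (c p.2 * d p.2) := mul_le_mul' ha1 ha2
        _ = (c p.1 * d p.2) * (c p.2 * d p.1) := by ring
    have hY : d p.1 * c p.2 = c p.2 * d p.1 := mul_comm _ _
    rw [hY]
    exact ad_pointwise h1 h2 h3
  have hmono2 : ∫⁻ p : ℝ × ℝ in {p | p.1 = p.2}, a p.1 * b p.2 ∂μ2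
      ≤ ∫⁻ p : ℝ × ℝ in {p | p.1 = p.2}, c p.1 * d p.2 ∂μ2 := by
    refine setLIntegral_mono ((mc.comp measurable_fst).mul (md.comp measurable_snd)) ?_
    intro p hp
    have hp' : p.1 = p.2 := hp
    rw [← hp']
    have := h p.1 p.1
    rwa [sup_idem, inf_idem] at this
  exact add_le_add hmono1 hmono2

lemma insertNth_zero_sup {n : ℕ} (s t : ℝ) (x y : Fin n → ℝ) :
    (Fin.insertNth 0 s x : Fin (n+1) → ℝ) ⊔ Fin.insertNth 0 t y
      = Fin.insertNth 0 (s ⊔ t) (x ⊔ y) := by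
  funext j
  cases j using Fin.cases with
  | zero => simp [Pi.sup_apply]
  | succ j =>
    rw [show Fin.succ j = (0 : Fin (n+1)).succAbove j by rw [Fin.succAbove_zero]]
    simp [Pi.sup_apply]

lemma insertNth_zero_inf {n : ℕ} (s t : ℝ) (x y : Fin n → ℝ) :
    (Fin.insertNth 0 s x : Fin (n+1) → ℝ) ⊓ Fin.insertNth 0 t y
      = Fin.insertNth 0 (s ⊓ t) (x ⊓ y) := by
  funext j
  cases j using Fin.cases with
  | zero => simp [Pi.inf_apply]
  | succ j =>
    rw [show Fin.succ j = (0 : Fin (n+1)).succAbove j by rw [Fin.succAbove_zero]]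
    simp [Pi.inf_apply]

/-- Ahlswede–Daykin four–functions inequality for finite products. -/
lemma ad_fin (ν : Measure ℝ) [SigmaFinite ν] :
    ∀ (n : ℕ) (a b c d : (Fin n → ℝ) → ℝ≥0∞), Measurable a → Measurable b →
      Measurable c → Measurable d →
      (∀ x y, a x * b y ≤ c (x ⊔ y) * d (x ⊓ y)) →
      (∫⁻ x, a x ∂Measure.pi fun _ => ν) * (∫⁻ x, b x ∂Measure.pi fun _ => ν)
        ≤ (∫⁻ x, c x ∂Measure.pi fun _ => ν) * (∫⁻ x, d x ∂Measure.pi fun _ => ν) := by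
  intro n
  induction n with
  | zero =>
    intro a b c d ma mb mc md h
    have hpi : (Measure.pi fun _ : Fin 0 => ν) = Measure.dirac (isEmptyElim : Fin 0 → ℝ) :=
      Measure.pi_of_empty _ _
    rw [hpi, lintegral_dirac' _ ma, lintegral_dirac' _ mb, lintegral_dirac' _ mc,
      lintegral_dirac' _ md]
    have := h isEmptyElim isEmptyElim
    rwa [sup_idem, inf_idem] at this
  | succ n ih =>
    intro a b c d ma mb mc md h
    set e := MeasurableEquiv.piFinSuccAbove (fun _ : Fin (n+1) => ℝ) 0 with he
    have mp : MeasurePreserving e (Measure.pi fun _ => ν)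
        ((ν).prod (Measure.pi fun _ : Fin n => ν)) :=
      measurePreserving_piFinSuccAbove (fun _ => ν) 0
    have hesymm : ∀ (t : ℝ) (x : Fin n → ℝ), e.symm (t, x) = Fin.insertNth 0 t x := by
      intro t x
      rfl
    have red : ∀ f : (Fin (n+1) → ℝ) → ℝ≥0∞, Measurable f →
        ∫⁻ x, f x ∂(Measure.pi fun _ => ν)
          = ∫⁻ t : ℝ, (∫⁻ x : Fin n → ℝ, f (e.symm (t, x)) ∂Measure.pi fun _ => ν) ∂ν := by
      intro f mf
      rw [← (MeasurePreserving.symm e mp).lintegral_comp mf]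
      exact lintegral_prod _ ((mf.comp e.symm.measurable).aemeasurable)
    rw [red a ma, red b mb, red c mc, red d md]
    have msec : ∀ (f : (Fin (n+1) → ℝ) → ℝ≥0∞), Measurable f → ∀ t : ℝ,
        Measurable fun x : Fin n → ℝ => f (e.symm (t, x)) := by
      intro f mf t
      exact mf.comp (e.symm.measurable.comp (measurable_const.prodMk measurable_id))
    have mmarg : ∀ (f : (Fin (n+1) → ℝ) → ℝ≥0∞), Measurable f →
        Measurable fun t : ℝ => ∫⁻ x : Fin n → ℝ, f (e.symm (t, x)) ∂Measure.pi fun _ => ν := by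
      intro f mf
      exact (mf.comp e.symm.measurable).lintegral_prod_right'
    refine ad_one ν (mmarg a ma) (mmarg b mb) (mmarg c mc) (mmarg d md) ?_
    intro s t
    refine ih (fun x => a (e.symm (s, x))) (fun y => b (e.symm (t, y)))
      (fun u => c (e.symm (s ⊔ t, u))) (fun u => d (e.symm (s ⊓ t, u)))
      (msec a ma s) (msec b mb t) (msec c mc _) (msec d md _) ?_
    intro x y
    rw [hesymm, hesymm, hesymm, hesymm, ← insertNth_zero_sup, ← insertNth_zero_inf]
    exact h _ _

/-- Ahlswede–Daykin inequality over a general finite index set. -/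
lemma ad_pi {ι : Type*} [Fintype ι] (ν : Measure ℝ) [SigmaFinite ν]
    {a b c d : (ι → ℝ) → ℝ≥0∞}
    (ma : Measurable a) (mb : Measurable b) (mc : Measurable c) (md : Measurable d)
    (h : ∀ x y, a x * b y ≤ c (x ⊔ y) * d (x ⊓ y)) :
    (∫⁻ x, a x ∂Measure.pi fun _ : ι => ν) * (∫⁻ x, b x ∂Measure.pi fun _ : ι => ν)
      ≤ (∫⁻ x, c x ∂Measure.pi fun _ : ι => ν) * (∫⁻ x, d x ∂Measure.pi fun _ : ι => ν) := by
  set n := Fintype.card ι with hn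
  set e : Fin n ≃ ι := (Fintype.equivFin ι).symm with he
  set F : (Fin n → ℝ) ≃ᵐ (ι → ℝ) := MeasurableEquiv.piCongrLeft (fun _ : ι => ℝ) e with hF
  have mp : MeasurePreserving F (Measure.pi fun _ : Fin n => ν) (Measure.pi fun _ : ι => ν) :=
    measurePreserving_piCongrLeft (fun _ : ι => ν) e
  have Fapp : ∀ (x : Fin n → ℝ) (i : ι), F x i = x (e.symm i) := by
    intro x i
    have h1 : F x (e (e.symm i)) = x (e.symm i) := by
      rw [hF]
      exact Equiv.piCongrLeft_apply_apply (fun _ : ι => ℝ) e x (e.symm i)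
    rwa [Equiv.apply_symm_apply] at h1
  have Fsup : ∀ x y : Fin n → ℝ, F (x ⊔ y) = F x ⊔ F y := by
    intro x y; funext i; simp [Fapp, Pi.sup_apply]
  have Finf : ∀ x y : Fin n → ℝ, F (x ⊓ y) = F x ⊓ F y := by
    intro x y; funext i; simp [Fapp, Pi.inf_apply]
  rw [← mp.lintegral_comp ma, ← mp.lintegral_comp mb, ← mp.lintegral_comp mc,
    ← mp.lintegral_comp md]
  refine ad_fin ν n (fun x => a (F x)) (fun x => b (F x)) (fun x => c (F x)) (fun x => d (F x))
    (ma.comp F.measurable) (mb.comp F.measurable) (mc.comp F.measurable) (md.comp F.measurable)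
    ?_
  intro x y
  rw [Fsup, Finf]
  exact h _ _

end AD

/-! #### FKG inequality -/

section FKG

variable {ι : Type*} [Fintype ι]

/-- A set is increasing if it is upward closed for the pointwise order. -/
def IncrSet (A : Set (ι → ℝ)) : Prop := ∀ ⦃x y : ι → ℝ⦄, x ≤ y → x ∈ A → y ∈ A

/-- FKG inequality (pairwise form) for a log-supermodular density. -/
lemma fkg_pair (ν : Measure ℝ) [SigmaFinite ν] {ρ : (ι → ℝ) → ℝ≥0∞} (mρ : Measurable ρ)
    (hρ : ∀ x y, ρ x * ρ y ≤ ρ (x ⊔ y) * ρ (x ⊓ y))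
    {A B : Set (ι → ℝ)} (mA : MeasurableSet A) (mB : MeasurableSet B)
    (hA : IncrSet A) (hB : IncrSet B) :
    ((Measure.pi fun _ : ι => ν).withDensity ρ) A * ((Measure.pi fun _ : ι => ν).withDensity ρ) B
      ≤ ((Measure.pi fun _ : ι => ν).withDensity ρ) (A ∩ B)
        * ((Measure.pi fun _ : ι => ν).withDensity ρ) Set.univ := by
  have happ : ∀ S : Set (ι → ℝ), MeasurableSet S →
      ((Measure.pi fun _ : ι => ν).withDensity ρ) S
        = ∫⁻ x, S.indicator ρ x ∂(Measure.pi fun _ : ι => ν) := by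
    intro S hS
    rw [withDensity_apply _ hS, lintegral_indicator hS]
  rw [happ A mA, happ B mB, happ (A ∩ B) (mA.inter mB), happ Set.univ MeasurableSet.univ]
  have huniv : Set.indicator (Set.univ : Set (ι → ℝ)) ρ = ρ := by
    funext x; simp
  rw [huniv]
  refine ad_pi ν (mρ.indicator mA) (mρ.indicator mB) (mρ.indicator (mA.inter mB)) mρ ?_
  intro x y
  by_cases hx : x ∈ A
  · by_cases hy : y ∈ B
    · rw [Set.indicator_of_mem hx, Set.indicator_of_mem hy,
        Set.indicator_of_mem (Set.mem_inter (hA le_sup_left hx) (hB le_sup_right hy))]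
      exact hρ x y
    · rw [Set.indicator_of_notMem hy, mul_zero]
      exact zero_le
  · rw [Set.indicator_of_notMem hx, zero_mul]
    exact zero_le

/-- Iterated FKG over a finite family of increasing sets. -/
lemma fkg_finset (ν : Measure ℝ) [SigmaFinite ν] {ρ : (ι → ℝ) → ℝ≥0∞} (mρ : Measurable ρ)
    (hρ : ∀ x y, ρ x * ρ y ≤ ρ (x ⊔ y) * ρ (x ⊓ y))
    {κ : Type*} (S : Finset κ) (A : κ → Set (ι → ℝ))
    (mA : ∀ s, MeasurableSet (A s)) (hA : ∀ s, IncrSet (A s)) :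
    (∏ s ∈ S, ((Measure.pi fun _ : ι => ν).withDensity ρ) (A s))
        * ((Measure.pi fun _ : ι => ν).withDensity ρ) Set.univ
      ≤ ((Measure.pi fun _ : ι => ν).withDensity ρ) (⋂ s ∈ S, A s)
        * ((Measure.pi fun _ : ι => ν).withDensity ρ) Set.univ ^ S.card := by
  classical
  induction S using Finset.induction_on with
  | empty => simp
  | insert t S' hnot ih =>
    have hint_meas : MeasurableSet (⋂ s ∈ S', A s) :=
      MeasurableSet.biInter (Finset.countable_toSet S') fun s _ => mA s
    have hint_incr : IncrSet (⋂ s ∈ S', A s) := by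
      intro x y hxy hx
      simp only [Set.mem_iInter] at hx ⊢
      intro s hs
      exact hA s hxy (hx s hs)
    calc (∏ s ∈ insert t S', ((Measure.pi fun _ : ι => ν).withDensity ρ) (A s))
          * ((Measure.pi fun _ : ι => ν).withDensity ρ) Set.univ
        = ((Measure.pi fun _ : ι => ν).withDensity ρ) (A t)
          * ((∏ s ∈ S', ((Measure.pi fun _ : ι => ν).withDensity ρ) (A s))
            * ((Measure.pi fun _ : ι => ν).withDensity ρ) Set.univ) := by
          rw [Finset.prod_insert hnot]; ring
      _ ≤ ((Measure.pi fun _ : ι => ν).withDensity ρ) (A t)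
          * (((Measure.pi fun _ : ι => ν).withDensity ρ) (⋂ s ∈ S', A s)
            * ((Measure.pi fun _ : ι => ν).withDensity ρ) Set.univ ^ S'.card) :=
          mul_le_mul_right ih _
      _ = (((Measure.pi fun _ : ι => ν).withDensity ρ) (A t)
          * ((Measure.pi fun _ : ι => ν).withDensity ρ) (⋂ s ∈ S', A s))
            * ((Measure.pi fun _ : ι => ν).withDensity ρ) Set.univ ^ S'.card := by ring
      _ ≤ (((Measure.pi fun _ : ι => ν).withDensity ρ) (A t ∩ ⋂ s ∈ S', A s)
          * ((Measure.pi fun _ : ι => ν).withDensity ρ) Set.univ)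
            * ((Measure.pi fun _ : ι => ν).withDensity ρ) Set.univ ^ S'.card :=
          mul_le_mul_left (fkg_pair ν mρ hρ (mA t) hint_meas (hA t) hint_incr) _
      _ = ((Measure.pi fun _ : ι => ν).withDensity ρ) (⋂ s ∈ insert t S', A s)
          * ((Measure.pi fun _ : ι => ν).withDensity ρ) Set.univ ^ (insert t S').card := by
          rw [Finset.card_insert_of_notMem hnot, Finset.set_biInter_insert, pow_succ]
          ring

end FKG

/-! #### Supermodularity and measurability of the Gibbs density -/

set_option linter.unusedSectionVars false

section Supermod

variable {d L : ℕ} [NeZero L] {lam η : ℝ} {V : ℝ → ℝ}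

instance nu_sigmaFinite (η : ℝ) :
    SigmaFinite (volume + ENNReal.ofReal η • Measure.dirac (0 : ℝ)) := by
  haveI : IsFiniteMeasure (ENNReal.ofReal η • Measure.dirac (0 : ℝ)) := by
    constructor
    simp [ENNReal.ofReal_lt_top]
  infer_instance

lemma quad_supermod (a a' b b' : ℝ) :
    (max a a' - max b b') ^ 2 + (min a a' - min b b') ^ 2 ≤ (a - b) ^ 2 + (a' - b') ^ 2 := by
  rcases le_total a a' with h1 | h1 <;> rcases le_total b b' with h2 | h2
  · rw [max_eq_right h1, max_eq_right h2, min_eq_left h1, min_eq_left h2] <;> nlinarith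
  · rw [max_eq_right h1, max_eq_left h2, min_eq_left h1, min_eq_right h2] <;>
      nlinarith [mul_nonneg (sub_nonneg.mpr h1) (sub_nonneg.mpr h2)]
  · rw [max_eq_left h1, max_eq_right h2, min_eq_right h1, min_eq_left h2] <;>
      nlinarith [mul_nonneg (sub_nonneg.mpr h1) (sub_nonneg.mpr h2)]
  · rw [max_eq_left h1, max_eq_left h2, min_eq_right h1, min_eq_right h2] <;> nlinarith

lemma vsum_supermod (V : ℝ → ℝ) (a b : ℝ) : V (max a b) + V (min a b) = V a + V b := by
  rcases le_total a b with h | h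
  · rw [max_eq_right h, min_eq_left h, add_comm]
  · rw [max_eq_left h, min_eq_right h]

/-- Submodularity of the Hamiltonian. -/
lemma hamPer_submod (hlam : 0 ≤ lam) (φ ψ : (Fin d → ZMod L) → ℝ) :
    HamPer d L lam V (φ ⊔ ψ) + HamPer d L lam V (φ ⊓ ψ)
      ≤ HamPer d L lam V φ + HamPer d L lam V ψ := by
  unfold HamPer
  have hgrad : (∑ i, ∑ j, (if torusAdj d L i j then ((φ ⊔ ψ) i - (φ ⊔ ψ) j) ^ 2 else 0))
      + (∑ i, ∑ j, (if torusAdj d L i j then ((φ ⊓ ψ) i - (φ ⊓ ψ) j) ^ 2 else 0))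
      ≤ (∑ i, ∑ j, (if torusAdj d L i j then (φ i - φ j) ^ 2 else 0))
        + (∑ i, ∑ j, (if torusAdj d L i j then (ψ i - ψ j) ^ 2 else 0)) := by
    rw [← Finset.sum_add_distrib, ← Finset.sum_add_distrib]
    refine Finset.sum_le_sum fun i _ => ?_
    rw [← Finset.sum_add_distrib, ← Finset.sum_add_distrib]
    refine Finset.sum_le_sum fun j _ => ?_
    by_cases hadj : torusAdj d L i j
    · simp only [if_pos hadj, Pi.sup_apply, Pi.inf_apply]
      exact quad_supermod (φ i) (ψ i) (φ j) (ψ j)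
    · simp [if_neg hadj]
  have hv : (∑ i, V ((φ ⊔ ψ) i)) + (∑ i, V ((φ ⊓ ψ) i)) = (∑ i, V (φ i)) + (∑ i, V (ψ i)) := by
    rw [← Finset.sum_add_distrib, ← Finset.sum_add_distrib]
    refine Finset.sum_congr rfl fun i _ => ?_
    simp only [Pi.sup_apply, Pi.inf_apply]
    exact vsum_supermod V (φ i) (ψ i)
  have hc : (0:ℝ) ≤ 1 / (8 * d) := by positivity
  nlinarith [mul_le_mul_of_nonneg_left hgrad hc, mul_le_mul_of_nonneg_left hv.le hlam,
    mul_le_mul_of_nonneg_left hv.ge hlam]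

/-- Log-supermodularity of the density. -/
lemma densPer_supermod (hlam : 0 ≤ lam) (φ ψ : (Fin d → ZMod L) → ℝ) :
    ENNReal.ofReal (densPer d L lam V φ) * ENNReal.ofReal (densPer d L lam V ψ)
      ≤ ENNReal.ofReal (densPer d L lam V (φ ⊔ ψ))
        * ENNReal.ofReal (densPer d L lam V (φ ⊓ ψ)) := by
  unfold densPer
  by_cases hφ : ∀ i, 0 ≤ φ i
  · by_cases hψ : ∀ i, 0 ≤ ψ i
    · have hs : ∀ i, 0 ≤ (φ ⊔ ψ) i := fun i => le_trans (hφ i) (le_max_left _ _)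
      have hi : ∀ i, 0 ≤ (φ ⊓ ψ) i := fun i => le_min (hφ i) (hψ i)
      rw [if_pos hφ, if_pos hψ, if_pos hs, if_pos hi,
        ← ENNReal.ofReal_mul (Real.exp_nonneg _), ← ENNReal.ofReal_mul (Real.exp_nonneg _),
        ← Real.exp_add, ← Real.exp_add]
      refine ENNReal.ofReal_le_ofReal (Real.exp_le_exp.mpr ?_)
      have := hamPer_submod (V := V) hlam φ ψ
      linarith
    · rw [if_neg hψ]
      simp
  · rw [if_neg hφ]
    simp

lemma measurable_V (hcvx : ConvexOn ℝ Set.univ V) : Measurable V := by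
  have : ContinuousOn V Set.univ := hcvx.continuousOn isOpen_univ
  exact (continuousOn_univ.mp this).measurable

lemma measurable_hamPer (hcvx : ConvexOn ℝ Set.univ V) :
    Measurable fun φ : (Fin d → ZMod L) → ℝ => HamPer d L lam V φ := by
  unfold HamPer
  have h1 : Measurable fun φ : (Fin d → ZMod L) → ℝ =>
      ∑ i, ∑ j, (if torusAdj d L i j then (φ i - φ j) ^ 2 else 0) := by
    refine Finset.measurable_sum _ fun i _ => ?_
    refine Finset.measurable_sum _ fun j _ => ?_
    by_cases hadj : torusAdj d L i j
    · simp only [if_pos hadj]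
      exact ((measurable_pi_apply i).sub (measurable_pi_apply j)).pow_const 2
    · simp only [if_neg hadj]
      exact measurable_const
  have h2 : Measurable fun φ : (Fin d → ZMod L) → ℝ => ∑ i, V (φ i) :=
    Finset.measurable_sum _ fun i _ => (measurable_V hcvx).comp (measurable_pi_apply i)
  exact (measurable_const.mul h1).add (measurable_const.mul h2)

lemma measurable_densPer (hcvx : ConvexOn ℝ Set.univ V) :
    Measurable fun φ : (Fin d → ZMod L) → ℝ => ENNReal.ofReal (densPer d L lam V φ) := by
  refine ENNReal.measurable_ofReal.comp ?_
  unfold densPer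
  have hset : MeasurableSet {φ : (Fin d → ZMod L) → ℝ | ∀ i, 0 ≤ φ i} := by
    rw [show {φ : (Fin d → ZMod L) → ℝ | ∀ i, 0 ≤ φ i}
      = ⋂ i, (fun φ : (Fin d → ZMod L) → ℝ => φ i) ⁻¹' (Set.Ici 0) by ext φ; simp]
    exact MeasurableSet.iInter fun i => (measurable_pi_apply i) measurableSet_Ici
  exact Measurable.ite hset
    ((Real.continuous_exp.measurable).comp (measurable_hamPer hcvx).neg) measurable_const

end Supermod

/-! #### Translation invariance -/

section Translate

variable {d L : ℕ} [NeZero L] {lam η : ℝ} {V : ℝ → ℝ}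

lemma torusAdj_translate (i j v : Fin d → ZMod L) (h : torusAdj d L i j) :
    torusAdj d L (i + v) (j + v) := by
  obtain ⟨k, hk | hk⟩ := h
  · refine ⟨k, Or.inl ?_⟩
    subst hk
    funext m
    by_cases hm : m = k
    · subst hm
      simp [Function.update_self, Pi.add_apply]
      ring
    · simp [Function.update_of_ne hm, Pi.add_apply]
  · refine ⟨k, Or.inr ?_⟩
    subst hk
    funext m
    by_cases hm : m = k
    · subst hm
      simp [Function.update_self, Pi.add_apply]
      ring
    · simp [Function.update_of_ne hm, Pi.add_apply]

lemma torusAdj_translate_iff (i j v : Fin d → ZMod L) :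
    torusAdj d L (i + v) (j + v) ↔ torusAdj d L i j := by
  constructor
  · intro h
    have := torusAdj_translate (i + v) (j + v) (-v) h
    simpa using this
  · exact torusAdj_translate i j v

lemma hamPer_translate (v : Fin d → ZMod L) (φ : (Fin d → ZMod L) → ℝ) :
    HamPer d L lam V (fun i => φ (i + v)) = HamPer d L lam V φ := by
  unfold HamPer
  congr 1
  · congr 1
    refine Fintype.sum_equiv (Equiv.addRight v) _ _ fun i => ?_
    refine Fintype.sum_equiv (Equiv.addRight v) _ _ fun j => ?_
    simp only [Equiv.coe_addRight]
    refine if_congr ?_ rfl rfl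
    exact (torusAdj_translate_iff i j v).symm
  · congr 1
    exact Fintype.sum_equiv (Equiv.addRight v) _ _ fun i => rfl

lemma densPer_translate (v : Fin d → ZMod L) (φ : (Fin d → ZMod L) → ℝ) :
    densPer d L lam V (fun i => φ (i + v)) = densPer d L lam V φ := by
  unfold densPer
  have hpos : (∀ i, 0 ≤ φ (i + v)) ↔ (∀ i, 0 ≤ φ i) := by
    constructor
    · intro h i
      have := h (i + -v)
      simpa using this
    · intro h i
      exact h _
  rw [if_congr hpos rfl rfl, hamPer_translate v φ]

lemma gibbsPer_translate (hcvx : ConvexOn ℝ Set.univ V) (v : Fin d → ZMod L)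
    {A : Set ((Fin d → ZMod L) → ℝ)} (mA : MeasurableSet A)
    (mdens : Measurable fun φ : (Fin d → ZMod L) → ℝ => ENNReal.ofReal (densPer d L lam V φ)) :
    gibbsPer d L lam η V ((fun φ : (Fin d → ZMod L) → ℝ => fun i => φ (i + v)) ⁻¹' A)
      = gibbsPer d L lam η V A := by
  set ν : Measure ℝ := volume + ENNReal.ofReal η • Measure.dirac (0 : ℝ) with hν
  set ρ : ((Fin d → ZMod L) → ℝ) → ℝ≥0∞ :=
    fun φ => ENNReal.ofReal (densPer d L lam V φ) with hρ
  set e : (Fin d → ZMod L) ≃ (Fin d → ZMod L) := Equiv.addRight (-v) with he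
  set F : ((Fin d → ZMod L) → ℝ) ≃ᵐ ((Fin d → ZMod L) → ℝ) :=
    MeasurableEquiv.piCongrLeft (fun _ => ℝ) e with hF
  have mp : MeasurePreserving F (Measure.pi fun _ => ν) (Measure.pi fun _ => ν) :=
    measurePreserving_piCongrLeft (fun _ => ν) e
  have Fapp : ∀ (x : (Fin d → ZMod L) → ℝ) (i : Fin d → ZMod L), F x i = x (i + v) := by
    intro x i
    have h1 : F x (e (e.symm i)) = x (e.symm i) := by
      rw [hF]
      exact Equiv.piCongrLeft_apply_apply (fun _ => ℝ) e x (e.symm i)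
    rw [Equiv.apply_symm_apply] at h1
    rw [h1]
    congr 1
    rw [he]
    simp [Equiv.symm_apply_eq]
  have hT : (fun φ : (Fin d → ZMod L) → ℝ => fun i => φ (i + v)) = ⇑F := by
    funext φ
    funext i
    rw [Fapp]
  have hTmeas : MeasurableSet ((fun φ : (Fin d → ZMod L) → ℝ => fun i => φ (i + v)) ⁻¹' A) := by
    rw [hT]
    exact F.measurable mA
  unfold gibbsPer priorPer
  rw [← hν, withDensity_apply _ hTmeas, withDensity_apply _ mA,
    ← lintegral_indicator hTmeas, ← lintegral_indicator mA]
  have hpoint : ∀ φ, Set.indicator ((fun φ : (Fin d → ZMod L) → ℝ => fun i => φ (i + v)) ⁻¹' A)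
      ρ φ = Set.indicator A ρ (F φ) := by
    intro φ
    by_cases hφ : (fun i => φ (i + v)) ∈ A
    · have hmem : φ ∈ ((fun φ : (Fin d → ZMod L) → ℝ => fun i => φ (i + v)) ⁻¹' A) := hφ
      have hφ' : F φ ∈ A := by
        rw [← hT]
        exact hφ
      rw [Set.indicator_of_mem hmem, Set.indicator_of_mem hφ']
      show ρ φ = ρ (F φ)
      rw [← hT, hρ]
      simp only []
      rw [densPer_translate]
    · have hmem : φ ∉ ((fun φ : (Fin d → ZMod L) → ℝ => fun i => φ (i + v)) ⁻¹' A) := hφ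
      have hφ' : F φ ∉ A := by
        rw [← hT]
        exact hφ
      rw [Set.indicator_of_notMem hmem, Set.indicator_of_notMem hφ']
  calc ∫⁻ φ, Set.indicator ((fun φ : (Fin d → ZMod L) → ℝ => fun i => φ (i + v)) ⁻¹' A) ρ φ
        ∂(Measure.pi fun _ => ν)
      = ∫⁻ φ, Set.indicator A ρ (F φ) ∂(Measure.pi fun _ => ν) := by
        congr 1; funext φ; exact hpoint φ
    _ = ∫⁻ φ, Set.indicator A ρ φ ∂(Measure.pi fun _ => ν) :=
        mp.lintegral_comp (mdens.indicator mA)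

end Translate

/-! #### The identity `Z^{+,per}_{L;λ,η}[Ω_+^*] = Z^{+,per}_{L;λ,0}` -/

section Identity

variable {d L : ℕ} [NeZero L] {lam η : ℝ} {V : ℝ → ℝ}

/-- Restriction of a product measure to a box is the product of restrictions. -/
lemma pi_restrict_box {ι : Type*} [Fintype ι] (ν : ι → Measure ℝ) [∀ i, SigmaFinite (ν i)]
    (s : ι → Set ℝ) (hs : ∀ i, MeasurableSet (s i)) :
    (Measure.pi ν).restrict (Set.pi Set.univ s) = Measure.pi (fun i => (ν i).restrict (s i)) := by
  haveI : ∀ i, SigmaFinite ((ν i).restrict (s i)) := fun i => inferInstance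
  refine (Measure.pi_eq fun t ht => ?_).symm
  rw [Measure.restrict_apply (MeasurableSet.univ_pi ht), ← Set.pi_inter_distrib,
    Measure.pi_pi]
  exact Finset.prod_congr rfl fun i _ => (Measure.restrict_apply (ht i)).symm

lemma nu_restrict_Ioi (η : ℝ) :
    (volume + ENNReal.ofReal η • Measure.dirac (0 : ℝ)).restrict (Set.Ioi 0)
      = volume.restrict (Set.Ioi 0) := by
  rw [Measure.restrict_add, Measure.restrict_smul]
  have : (Measure.dirac (0 : ℝ)).restrict (Set.Ioi 0) = 0 := by
    rw [Measure.restrict_eq_zero]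
    rw [Measure.dirac_apply' _ measurableSet_Ioi]
    simp
  rw [this]
  simp

lemma posSet_eq_pi :
    {φ : (Fin d → ZMod L) → ℝ | ∀ i, 0 < φ i}
      = Set.pi Set.univ (fun _ : Fin d → ZMod L => Set.Ioi (0:ℝ)) := by
  ext φ
  simp [Set.mem_pi]

lemma posSet_measurable :
    MeasurableSet {φ : (Fin d → ZMod L) → ℝ | ∀ i, 0 < φ i} := by
  rw [posSet_eq_pi]
  exact MeasurableSet.univ_pi fun _ => measurableSet_Ioi

/-- The key identity: the Gibbs weight of "every site strictly positive" under pinning `η`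
equals the full partition function without pinning. -/
lemma gibbs_posSet_eq_Z0 (hcvx : ConvexOn ℝ Set.univ V) :
    gibbsPer d L lam η V {φ : (Fin d → ZMod L) → ℝ | ∀ i, 0 < φ i}
      = gibbsPer d L lam 0 V Set.univ := by
  set ρ : ((Fin d → ZMod L) → ℝ) → ℝ≥0∞ :=
    fun φ => ENNReal.ofReal (densPer d L lam V φ) with hρ
  have mρ : Measurable ρ := measurable_densPer hcvx
  set Apos := {φ : (Fin d → ZMod L) → ℝ | ∀ i, 0 < φ i} with hApos
  have mA : MeasurableSet Apos := posSet_measurable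
  have hprior0 : priorPer d L 0 = Measure.pi fun _ : Fin d → ZMod L => (volume : Measure ℝ) := by
    unfold priorPer
    congr 1
    funext
    simp
  have lhs_eq : gibbsPer d L lam η V Apos
      = ∫⁻ φ, ρ φ ∂Measure.pi fun _ : Fin d → ZMod L => volume.restrict (Set.Ioi 0) := by
    unfold gibbsPer
    rw [withDensity_apply _ mA]
    show ∫⁻ φ, ρ φ ∂(priorPer d L η).restrict Apos = _
    unfold priorPer
    rw [hApos, posSet_eq_pi, pi_restrict_box _ _ fun _ => measurableSet_Ioi]
    congr 1
    congr 1
    funext i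
    exact nu_restrict_Ioi η
  have rhs_eq : gibbsPer d L lam 0 V Set.univ
      = ∫⁻ φ, ρ φ ∂Measure.pi fun _ : Fin d → ZMod L => (volume : Measure ℝ) := by
    unfold gibbsPer
    rw [withDensity_apply _ MeasurableSet.univ, hprior0, Measure.restrict_univ]
  rw [lhs_eq, rhs_eq]
  have hsplit : (∫⁻ φ in Apos, ρ φ ∂Measure.pi fun _ : Fin d → ZMod L => (volume : Measure ℝ))
      + (∫⁻ φ in Aposᶜ, ρ φ ∂Measure.pi fun _ : Fin d → ZMod L => (volume : Measure ℝ))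
      = ∫⁻ φ, ρ φ ∂Measure.pi fun _ : Fin d → ZMod L => (volume : Measure ℝ) :=
    lintegral_add_compl _ mA
  have hzero : (∫⁻ φ in Aposᶜ, ρ φ ∂Measure.pi fun _ : Fin d → ZMod L => (volume : Measure ℝ))
      = 0 := by
    have hae : ∀ᵐ φ ∂(Measure.pi fun _ : Fin d → ZMod L => (volume : Measure ℝ)),
        ∀ i, φ i ≠ 0 := by
      rw [MeasureTheory.ae_all_iff]
      exact fun i => Measure.ae_eval_ne _ i 0
    have : ∀ᵐ φ ∂(Measure.pi fun _ : Fin d → ZMod L => (volume : Measure ℝ)),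
        φ ∈ Aposᶜ → ρ φ = 0 := by
      filter_upwards [hae] with φ hφ hmem
      have : ¬ ∀ i, 0 ≤ φ i := by
        intro hc
        exact hmem fun i => lt_of_le_of_ne (hc i) (Ne.symm (hφ i))
      rw [hρ]
      simp only []
      unfold densPer
      rw [if_neg this]
      simp
    calc (∫⁻ φ in Aposᶜ, ρ φ ∂Measure.pi fun _ : Fin d → ZMod L => (volume : Measure ℝ))
        = ∫⁻ φ in Aposᶜ, 0 ∂Measure.pi fun _ : Fin d → ZMod L => (volume : Measure ℝ) :=
          setLIntegral_congr_fun_ae mA.compl this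
      _ = 0 := lintegral_zero
  have hfin : (∫⁻ φ in Apos, ρ φ ∂Measure.pi fun _ : Fin d → ZMod L => (volume : Measure ℝ))
      = ∫⁻ φ, ρ φ ∂Measure.pi fun _ : Fin d → ZMod L => (volume : Measure ℝ) := by
    rw [← hsplit, hzero, add_zero]
  rw [← hfin]
  show ∫⁻ φ, ρ φ ∂(Measure.pi fun _ : Fin d → ZMod L => Measure.restrict volume (Set.Ioi (0:ℝ)))
      = ∫⁻ φ, ρ φ ∂((Measure.pi fun _ : Fin d → ZMod L => (volume : Measure ℝ)).restrict Apos)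
  rw [hApos, posSet_eq_pi, pi_restrict_box _ _ fun _ => measurableSet_Ioi]

end Identity

/-! #### Covering arithmetic -/

section Cover

variable {L R : ℕ} [NeZero L]

lemma M1_pos (hL1 : 1 ≤ L) : 0 < (L + 2*R)/(2*R+1) :=
  Nat.div_pos (by omega) (by omega)

lemma M1_mul_ge : L ≤ ((L + 2*R)/(2*R+1)) * (2*R+1) := by
  have h1 : ((L + 2*R)/(2*R+1)) * (2*R+1) + (L + 2*R) % (2*R+1) = L + 2*R := by
    rw [mul_comm]
    exact Nat.div_add_mod _ _
  have h2 : (L + 2*R) % (2*R+1) < 2*R+1 := Nat.mod_lt _ (by omega)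
  omega

lemma M1_mul_R_le (hL : 2*(2*R+1) ≤ L) : ((L + 2*R)/(2*R+1)) * R ≤ L := by
  set M1 := (L + 2*R)/(2*R+1) with hM1
  have h1 : M1 * (2*R+1) ≤ L + 2*R := Nat.div_mul_le_self _ _
  rcases Nat.eq_zero_or_pos R with hR | hR
  · subst hR
    simpa using Nat.le_of_lt_succ (by omega)
  have key : M1 * R * (2*R+1) ≤ L * (2*R+1) := by
    calc M1 * R * (2*R+1) = (M1 * (2*R+1)) * R := by ring
      _ ≤ (L + 2*R) * R := Nat.mul_le_mul_right R h1
      _ ≤ L * (2*R+1) := by nlinarith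
  exact Nat.le_of_mul_le_mul_right key (by omega)

lemma coord_cover (hL1 : 1 ≤ L) (x : ZMod L) :
    ∃ q : ℕ, q < (L + 2*R)/(2*R+1) ∧ ∃ z : ℤ, z.natAbs ≤ R ∧
      (z : ZMod L) = x - ((q*(2*R+1) : ℕ) : ZMod L) := by
  set M1 := (L + 2*R)/(2*R+1) with hM1
  have hM1pos : 0 < M1 := M1_pos hL1
  have hM1ge : L ≤ M1 * (2*R+1) := M1_mul_ge
  have hxval : ((x.val : ℕ) : ZMod L) = x := ZMod.natCast_rightInverse x
  have hnL : x.val < L := ZMod.val_lt x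
  by_cases hcase : L ≤ x.val + R
  · refine ⟨0, hM1pos, (x.val : ℤ) - L, ?_, ?_⟩
    · omega
    · push_cast
      rw [ZMod.natCast_self]
      rw [hxval]
      simp
  · push_neg at hcase
    set q := (x.val + R) / (2*R+1) with hq
    set r := (x.val + R) % (2*R+1) with hr
    have hdm : q * (2*R+1) + r = x.val + R := by
      rw [hq, hr]
      rw [mul_comm]
      exact Nat.div_add_mod _ _
    have hrlt : r < 2*R+1 := Nat.mod_lt _ (by omega)
    have hqlt : q < M1 := by
      have h1 : q * (2*R+1) < L := by omega
      have h2 : q * (2*R+1) < M1 * (2*R+1) := lt_of_lt_of_le h1 hM1ge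
      exact Nat.lt_of_mul_lt_mul_right h2
    refine ⟨q, hqlt, (x.val : ℤ) - q*(2*R+1), ?_, ?_⟩
    · have hdmz : (q:ℤ)*(2*R+1) + r = (x.val:ℤ) + R := by exact_mod_cast hdm
      have hrz : (r:ℤ) < 2*R+1 := by exact_mod_cast hrlt
      omega
    · push_cast
      rw [hxval]

end Cover

/-! #### Main theorem -/

/-- Chessboard estimate on the probability of no pinned site in a box, `d ≥ 3`: there is
`c₁ = c₁(d) > 0` such that for `λ > 0`, `η ≥ 0`, `L = 2^N` and `1 ≤ 2R+1 ≤ L/2`,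
`μ^{+,per}_{L;λ,η}(φ_j > 0 ∀ j ∈ B_R) ≤ exp(-c₁ R^d f^{per}_L(λ,η))`. -/
theorem muPer_no_pinned_site_in_ball_high_d
    (d : ℕ) (hd : 3 ≤ d) :
    ∃ c₁ > (0 : ℝ),
      ∀ (V : ℝ → ℝ), (∀ x, V (-x) = V x) → ConvexOn ℝ Set.univ V → V ≠ 0 → V 0 = 0 →
      ∀ lam : ℝ, 0 < lam → ∀ η : ℝ, 0 ≤ η →
      ∀ L N : ℕ, ∀ hLN : L = 2 ^ N,
      ∀ R : ℕ, 1 ≤ 2 * R + 1 → 2 * R + 1 ≤ L / 2 →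
        (@muPer d L ⟨by rw [hLN]; exact (Nat.two_pow_pos N).ne'⟩ lam η V
            {φ | ∀ j ∈ torusBall d L R, 0 < φ j}).toReal ≤
          Real.exp (-(c₁ * (R : ℝ) ^ d *
            @freeEnergyPer d L ⟨by rw [hLN]; exact (Nat.two_pow_pos N).ne'⟩ lam η V)) := by
  refine ⟨1, one_pos, ?_⟩
  intro V hVeven hVcvx hVne hV0 lam hlam η hη L N hLN R hR1 hRL
  haveI : NeZero L := ⟨by rw [hLN]; exact (Nat.two_pow_pos N).ne'⟩
  show (muPer d L lam η V {φ | ∀ j ∈ torusBall d L R, 0 < φ j}).toReal ≤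
    Real.exp (-(1 * (R : ℝ) ^ d * freeEnergyPer d L lam η V))
  have hL1 : 1 ≤ L := Nat.one_le_iff_ne_zero.mpr (NeZero.ne L)
  have hL2 : 2*(2*R+1) ≤ L := by
    have := (Nat.le_div_iff_mul_le (by norm_num : 0 < 2)).mp hRL
    omega
  set ν : Measure ℝ := volume + ENNReal.ofReal η • Measure.dirac (0 : ℝ) with hν
  set ρ : ((Fin d → ZMod L) → ℝ) → ℝ≥0∞ :=
    fun φ => ENNReal.ofReal (densPer d L lam V φ) with hρ
  have mρ : Measurable ρ := measurable_densPer hVcvx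
  have hρsup : ∀ x y, ρ x * ρ y ≤ ρ (x ⊔ y) * ρ (x ⊓ y) :=
    fun x y => densPer_supermod hlam.le x y
  have hGpi : gibbsPer d L lam η V
      = (Measure.pi fun _ : Fin d → ZMod L => ν).withDensity ρ := rfl
  set Aball : Set ((Fin d → ZMod L) → ℝ) := {φ | ∀ j ∈ torusBall d L R, 0 < φ j} with hAball
  have mAball : MeasurableSet Aball := by
    have hst : Aball = ⋂ (j) (_ : j ∈ torusBall d L R),
        (fun φ : (Fin d → ZMod L) → ℝ => φ j) ⁻¹' Set.Ioi (0:ℝ) := by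
      ext φ
      simp [hAball]
    rw [hst]
    exact MeasurableSet.iInter fun j => MeasurableSet.iInter fun _ =>
      (measurable_pi_apply j) measurableSet_Ioi
  have hIball : IncrSet Aball := by
    intro x y hxy hx
    intro j hj
    exact lt_of_lt_of_le (hx j hj) (hxy j)
  have hLHS : (muPer d L lam η V Aball).toReal
      = ((gibbsPer d L lam η V Set.univ)⁻¹ * gibbsPer d L lam η V Aball).toReal := by
    rw [show muPer d L lam η V
      = (gibbsPer d L lam η V Set.univ)⁻¹ • gibbsPer d L lam η V from rfl,
      Measure.smul_apply, smul_eq_mul]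
  rw [hLHS]
  -- degenerate cases
  by_cases hZ0 : gibbsPer d L lam η V Set.univ = 0
  · have hB0 : gibbsPer d L lam η V Aball = 0 :=
      le_antisymm (le_trans (measure_mono (Set.subset_univ _)) hZ0.le) (zero_le)
    rw [hB0, mul_zero]
    simpa using (Real.exp_pos _).le
  by_cases hZt : gibbsPer d L lam η V Set.univ = ⊤
  · rw [hZt, ENNReal.inv_top, zero_mul]
    simpa using (Real.exp_pos _).le
  -- covering machinery
  set M1 := (L + 2*R)/(2*R+1) with hM1
  have hM1pos : 0 < M1 := M1_pos hL1
  have hM0 : M1 ^ d ≠ 0 := pow_ne_zero d hM1pos.ne'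
  set shiftVec : (Fin d → Fin M1) → (Fin d → ZMod L) :=
    fun s k => (((s k : ℕ) * (2*R+1) : ℕ) : ZMod L) with hshift
  set Afam : (Fin d → Fin M1) → Set ((Fin d → ZMod L) → ℝ) :=
    fun s => (fun φ : (Fin d → ZMod L) → ℝ => fun i => φ (i + shiftVec s)) ⁻¹' Aball with hAfam
  have mAfam : ∀ s, MeasurableSet (Afam s) := by
    intro s
    have : Measurable fun φ : (Fin d → ZMod L) → ℝ => (fun i => φ (i + shiftVec s)) :=
      measurable_pi_iff.mpr fun i => measurable_pi_apply _
    exact this mAball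
  have hIfam : ∀ s, IncrSet (Afam s) := by
    intro s x y hxy hx
    exact hIball (fun i => hxy (i + shiftVec s)) hx
  have hGfam : ∀ s, gibbsPer d L lam η V (Afam s) = gibbsPer d L lam η V Aball :=
    fun s => gibbsPer_translate hVcvx (shiftVec s) mAball mρ
  have hcover : (⋂ s ∈ (Finset.univ : Finset (Fin d → Fin M1)), Afam s)
      ⊆ {φ : (Fin d → ZMod L) → ℝ | ∀ i, 0 < φ i} := by
    intro φ hφ
    intro u
    have hcc := fun k : Fin d => coord_cover (R := R) hL1 (u k)
    choose qq hqlt zz hz1 hz2 using hcc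
    set s : Fin d → Fin M1 := fun k => ⟨qq k, hqlt k⟩ with hs
    have hφs : φ ∈ Afam s := Set.mem_iInter₂.mp hφ s (Finset.mem_univ s)
    have hmem : ∀ j ∈ torusBall d L R, 0 < (fun i => φ (i + shiftVec s)) j := hφs
    have hj : (fun k => u k - ((qq k * (2*R+1) : ℕ) : ZMod L)) ∈ torusBall d L R := by
      intro m
      exact ⟨zz m, hz1 m, hz2 m⟩
    have hval := hmem _ hj
    have harg : ((fun k => u k - ((qq k * (2*R+1) : ℕ) : ZMod L)) + shiftVec s) = u := by
      funext k
      show (u k - ((qq k * (2*R+1) : ℕ) : ZMod L)) + (((s k : ℕ) * (2*R+1) : ℕ) : ZMod L) = u k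
      have hsk : (s k : ℕ) = qq k := rfl
      rw [hsk]
      exact sub_add_cancel _ _
    simp only [] at hval
    rw [harg] at hval
    exact hval
  have hcardκ : Fintype.card (Fin d → Fin M1) = M1 ^ d := by
    rw [Fintype.card_pi]
    simp
  have hfkg := fkg_finset ν mρ hρsup (Finset.univ : Finset (Fin d → Fin M1)) Afam mAfam hIfam
  rw [← hGpi] at hfkg
  have hprod : ∏ s ∈ (Finset.univ : Finset (Fin d → Fin M1)), gibbsPer d L lam η V (Afam s)
      = gibbsPer d L lam η V Aball ^ (M1 ^ d) := by
    rw [Finset.prod_congr rfl fun s _ => hGfam s, Finset.prod_const, Finset.card_univ, hcardκ]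
  have hchain : gibbsPer d L lam η V Aball ^ (M1 ^ d) * gibbsPer d L lam η V Set.univ
      ≤ gibbsPer d L lam η V {φ : (Fin d → ZMod L) → ℝ | ∀ i, 0 < φ i}
        * gibbsPer d L lam η V Set.univ ^ (M1 ^ d) := by
    calc gibbsPer d L lam η V Aball ^ (M1 ^ d) * gibbsPer d L lam η V Set.univ
        = (∏ s ∈ (Finset.univ : Finset (Fin d → Fin M1)), gibbsPer d L lam η V (Afam s))
          * gibbsPer d L lam η V Set.univ := by rw [hprod]
      _ ≤ gibbsPer d L lam η V (⋂ s ∈ (Finset.univ : Finset (Fin d → Fin M1)), Afam s)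
          * gibbsPer d L lam η V Set.univ ^ (Finset.univ : Finset (Fin d → Fin M1)).card := hfkg
      _ ≤ gibbsPer d L lam η V {φ : (Fin d → ZMod L) → ℝ | ∀ i, 0 < φ i}
          * gibbsPer d L lam η V Set.univ ^ (M1 ^ d) := by
          rw [Finset.card_univ, hcardκ]
          exact mul_le_mul_left (measure_mono hcover) _
  have hFZ0 : gibbsPer d L lam η V {φ : (Fin d → ZMod L) → ℝ | ∀ i, 0 < φ i}
      = gibbsPer d L lam 0 V Set.univ := gibbs_posSet_eq_Z0 hVcvx
  by_cases hF0 : gibbsPer d L lam η V {φ : (Fin d → ZMod L) → ℝ | ∀ i, 0 < φ i} = 0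
  · have hzero : gibbsPer d L lam η V Aball ^ (M1^d) * gibbsPer d L lam η V Set.univ = 0 :=
      le_antisymm (by rw [hF0, zero_mul] at hchain; exact hchain) (zero_le)
    rcases mul_eq_zero.mp hzero with hpow | hZc
    · have hB0 : gibbsPer d L lam η V Aball = 0 := by
        exact pow_eq_zero_iff hM0 |>.mp hpow
      rw [hB0, mul_zero]
      simpa using (Real.exp_pos _).le
    · exact absurd hZc hZ0
  -- main case: everything finite and positive
  have hFle : gibbsPer d L lam η V {φ : (Fin d → ZMod L) → ℝ | ∀ i, 0 < φ i}
      ≤ gibbsPer d L lam η V Set.univ := measure_mono (Set.subset_univ _)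
  have hFt : gibbsPer d L lam η V {φ : (Fin d → ZMod L) → ℝ | ∀ i, 0 < φ i} ≠ ⊤ :=
    fun h => hZt (top_le_iff.mp (h ▸ hFle))
  have hBle : gibbsPer d L lam η V Aball ≤ gibbsPer d L lam η V Set.univ :=
    measure_mono (Set.subset_univ _)
  have hBt : gibbsPer d L lam η V Aball ≠ ⊤ := fun h => hZt (top_le_iff.mp (h ▸ hBle))
  set Zr := (gibbsPer d L lam η V Set.univ).toReal with hZr_def
  set Br := (gibbsPer d L lam η V Aball).toReal with hBr_def
  set Fr := (gibbsPer d L lam η V {φ : (Fin d → ZMod L) → ℝ | ∀ i, 0 < φ i}).toReal with hFr_def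
  have hZrpos : 0 < Zr := ENNReal.toReal_pos hZ0 hZt
  have hFrpos : 0 < Fr := ENNReal.toReal_pos hF0 hFt
  have hFrZr : Fr ≤ Zr := ENNReal.toReal_mono hZt hFle
  have hmain_r : Br ^ (M1^d) * Zr ≤ Fr * Zr ^ (M1^d) := by
    have hlhs : ((gibbsPer d L lam η V Aball) ^ (M1^d) * gibbsPer d L lam η V Set.univ).toReal
        = Br ^ (M1^d) * Zr := by
      rw [ENNReal.toReal_mul, ENNReal.toReal_pow]
    have hrhs : ((gibbsPer d L lam η V {φ : (Fin d → ZMod L) → ℝ | ∀ i, 0 < φ i})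
        * gibbsPer d L lam η V Set.univ ^ (M1^d)).toReal = Fr * Zr ^ (M1^d) := by
      rw [ENNReal.toReal_mul, ENNReal.toReal_pow]
    rw [← hlhs, ← hrhs]
    exact ENNReal.toReal_mono (ENNReal.mul_ne_top hFt (ENNReal.pow_ne_top hZt)) hchain
  have hZplus0 : ZplusPer d L lam 0 V = Fr := by
    show (gibbsPer d L lam 0 V Set.univ).toReal = Fr
    rw [← hFZ0]
  have hfE : freeEnergyPer d L lam η V = ((L:ℝ)^d)⁻¹ * Real.log (Zr / Fr) := by
    show ((L : ℝ) ^ d)⁻¹ * Real.log (ZplusPer d L lam η V / ZplusPer d L lam 0 V) = _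
    rw [hZplus0]
    rfl
  set t := Real.log (Zr / Fr) with ht
  have ht0 : 0 ≤ t := Real.log_nonneg ((one_le_div hFrpos).mpr hFrZr)
  have hxM : (Br / Zr) ^ (M1^d) ≤ Fr / Zr := by
    rw [div_pow, div_le_div_iff₀ (pow_pos hZrpos _) hZrpos]
    exact hmain_r
  have hFZexp : Fr / Zr = Real.exp (-t) := by
    rw [ht, Real.exp_neg, Real.exp_log (div_pos hZrpos hFrpos), inv_div]
  have hMR : (M1:ℝ)^d * (R:ℝ)^d ≤ (L:ℝ)^d := by
    have hnat : (M1 * R)^d ≤ L^d := Nat.pow_le_pow_left (M1_mul_R_le hL2) d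
    have hcast := (Nat.cast_le (α := ℝ)).mpr hnat
    push_cast at hcast
    rwa [mul_pow] at hcast
  have hLd : (0:ℝ) < (L:ℝ)^d := by positivity
  have hexp_mono : Real.exp (-t)
      ≤ Real.exp (-(1 * (R:ℝ)^d * freeEnergyPer d L lam η V)) ^ (M1^d) := by
    rw [← Real.exp_nat_mul]
    refine Real.exp_le_exp.mpr ?_
    rw [hfE]
    have h2 : ((M1^d : ℕ):ℝ) * (R:ℝ)^d * ((L:ℝ)^d)⁻¹ ≤ 1 := by
      rw [← div_eq_mul_inv, div_le_one hLd]
      push_cast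
      exact hMR
    have h1 : ((M1^d : ℕ):ℝ) * (1 * (R:ℝ)^d * (((L:ℝ)^d)⁻¹ * t)) ≤ t := by
      calc ((M1^d:ℕ):ℝ) * (1 * (R:ℝ)^d * (((L:ℝ)^d)⁻¹ * t))
          = (((M1^d:ℕ):ℝ) * (R:ℝ)^d * ((L:ℝ)^d)⁻¹) * t := by ring
        _ ≤ 1 * t := mul_le_mul_of_nonneg_right h2 ht0
        _ = t := one_mul t
    nlinarith [h1]
  have hxfinal : Br / Zr
      ≤ Real.exp (-(1 * (R:ℝ)^d * freeEnergyPer d L lam η V)) := by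
    by_contra hcon
    push_neg at hcon
    have h1 : Real.exp (-(1 * (R:ℝ)^d * freeEnergyPer d L lam η V)) ^ (M1^d)
        < (Br / Zr) ^ (M1^d) :=
      pow_lt_pow_left₀ hcon (Real.exp_nonneg _) hM0
    have h2 := le_trans hxM (le_trans (le_of_eq hFZexp) hexp_mono)
    linarith
  rw [ENNReal.toReal_mul, ENNReal.toReal_inv, inv_mul_eq_div]
  exact hxfinal
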